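/- Let φ : ℝ^d → ℝ be a function with bounded second derivatives (Hessian norm at most 2E') on a convex neighborhood, so that φ(S) ≥ φ(P) + ⟨∇φ(P), S − P⟩ − E'·‖S − P‖² for all S, P in that neighborhood. If (Δ_k) is a martingale difference sequence with P + Δ_1 + ⋯ + Δ_k in the neighborhood and ‖Δ_k‖ ≤ 2/(n−k), then Σ_{k=0}^{n-1} E[φ(P + Δ_1 + ⋯ + Δ_k)] ≥ n·φ(P) − 4E'(1 + ln(n−1)). -/

import Mathlib

open MeasureTheory Finset RealInnerProductSpace

lemma tmlb_sum_bound (n : ℕ) (hn : 2 ≤ n) :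
    ∑ k ∈ Finset.range n, ∑ i ∈ Finset.Icc 1 k, (2/((n:ℝ)-i))^2
      ≤ 4*(1 + Real.log ((n:ℝ)-1)) := by
  have swap : ∑ k ∈ Finset.range n, ∑ i ∈ Finset.Icc 1 k, (2/((n:ℝ)-i))^2
      = ∑ i ∈ Finset.Icc 1 (n-1), ∑ k ∈ Finset.Icc i (n-1), (2/((n:ℝ)-i))^2 :=
    Finset.sum_comm' (by intro k i; simp only [mem_range, mem_Icc]; omega)
  have inner : ∀ i ∈ Finset.Icc 1 (n-1),
      ∑ k ∈ Finset.Icc i (n-1), (2/((n:ℝ)-i))^2 = 4 / ((n - i : ℕ) : ℝ) := by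
    intro i hi
    simp only [mem_Icc] at hi
    have hcast : (n:ℝ) - i = ((n - i : ℕ) : ℝ) := by
      have : i ≤ n := by omega
      push_cast [this]; ring
    have hpos : (0:ℝ) < ((n - i : ℕ) : ℝ) := by
      have : 1 ≤ n - i := by omega
      exact_mod_cast Nat.lt_of_lt_of_le Nat.zero_lt_one this
    rw [Finset.sum_const, Nat.card_Icc]
    have hcard : n - 1 + 1 - i = n - i := by omega
    rw [hcard, hcast, nsmul_eq_mul, div_pow]
    field_simp
    ring
  rw [swap, Finset.sum_congr rfl inner]
  have reindex : ∑ i ∈ Finset.Icc 1 (n-1), 4 / ((n - i : ℕ) : ℝ)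
      = ∑ j ∈ Finset.Icc 1 (n-1), 4 / ((j : ℕ) : ℝ) := by
    refine Finset.sum_nbij' (fun i => n - i) (fun j => n - j) ?_ ?_ ?_ ?_ ?_
    · intro a ha; simp only [mem_Icc] at *; omega
    · intro a ha; simp only [mem_Icc] at *; omega
    · intro a ha; simp only [mem_Icc] at ha; show n - (n - a) = a; omega
    · intro a ha; simp only [mem_Icc] at ha; show n - (n - a) = a; omega
    · intro a ha; rfl
  rw [reindex]
  have hh : ∑ j ∈ Finset.Icc 1 (n-1), 4 / ((j : ℕ) : ℝ)
      = 4 * ((harmonic (n-1) : ℚ) : ℝ) := by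
    rw [harmonic_eq_sum_Icc]
    push_cast
    rw [Finset.mul_sum]
    refine Finset.sum_congr rfl fun j hj => ?_
    rw [div_eq_mul_inv]
  rw [hh]
  have := harmonic_le_one_add_log (n-1)
  have hcast : ((n - 1 : ℕ) : ℝ) = (n:ℝ) - 1 := by
    have : 1 ≤ n := by omega
    push_cast [this]; ring
  rw [hcast] at this
  nlinarith

lemma tmlb_coord_le_norm {d : ℕ} (x : EuclideanSpace ℝ (Fin d)) (j : Fin d) :
    |x j| ≤ ‖x‖ := by
  rw [EuclideanSpace.norm_eq, ← Real.sqrt_sq_eq_abs]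
  refine Real.sqrt_le_sqrt ?_
  have := Finset.single_le_sum (f := fun i => ‖x i‖^2)
    (fun i _ => sq_nonneg _) (Finset.mem_univ j)
  simpa [Real.norm_eq_abs, sq_abs] using this

lemma tmlb_cross_zero {Ω : Type*} {m m0 : MeasurableSpace Ω} {μ : Measure Ω}
    [IsProbabilityMeasure μ] (hm : m ≤ m0) {d : ℕ}
    {X Y : Ω → EuclideanSpace ℝ (Fin d)} (hX : StronglyMeasurable[m] X)
    {C : ℝ} (hXb : ∀ᵐ ω ∂μ, ‖X ω‖ ≤ C)
    (hY : Integrable Y μ) (hYc : μ[Y|m] =ᵐ[μ] 0) :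
    ∫ ω, ⟪X ω, Y ω⟫ ∂μ = 0 := by
  have hYj_int : ∀ j : Fin d, Integrable (fun ω => Y ω j) μ := fun j => by
    simpa [PiLp.proj_apply] using (EuclideanSpace.proj (𝕜 := ℝ) j).integrable_comp hY
  have hXj_sm : ∀ j : Fin d, StronglyMeasurable[m] (fun ω => X ω j) := fun j => by
    simpa [PiLp.proj_apply] using
      (EuclideanSpace.proj (𝕜 := ℝ) j).continuous.comp_stronglyMeasurable hX
  have hprodint : ∀ j : Fin d, Integrable (fun ω => X ω j * Y ω j) μ := by
    intro j
    refine Integrable.bdd_mul (c := C) (hYj_int j)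
      ((hXj_sm j).mono hm).aestronglyMeasurable ?_
    filter_upwards [hXb] with ω hω
    exact le_trans (by simpa using tmlb_coord_le_norm (X ω) j) hω
  have key : ∀ j : Fin d, ∫ ω, X ω j * Y ω j ∂μ = 0 := by
    intro j
    have hYj_ce : μ[(fun ω => Y ω j)|m] =ᵐ[μ] 0 := by
      refine (ae_eq_condExp_of_forall_setIntegral_eq hm (hYj_int j)
        (fun s _ _ => integrableOn_zero) (fun s hs hμs => ?_) ?_).symm
      · have h2 : ∫ ω in s, Y ω ∂μ = 0 := by
          rw [← setIntegral_condExp hm hY hs,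
            setIntegral_congr_ae (hm s hs) (hYc.mono fun ω hω _ => hω)]
          simp
        have h1 : ∫ ω in s, Y ω j ∂μ = (EuclideanSpace.proj (𝕜 := ℝ) j) (∫ ω in s, Y ω ∂μ) := by
          have := (EuclideanSpace.proj (𝕜 := ℝ) j).integral_comp_comm
            (hY.integrableOn (s := s))
          simpa [PiLp.proj_apply] using this
        simp [h1, h2]
      · exact ⟨fun _ => 0, stronglyMeasurable_const, Filter.EventuallyEq.rfl⟩
    have pull := condExp_mul_of_stronglyMeasurable_left (μ := μ) (hXj_sm j) (hprodint j) (hYj_int j)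
    have hz : μ[(fun ω => X ω j * Y ω j)|m] =ᵐ[μ] 0 := by
      refine pull.trans ?_
      filter_upwards [hYj_ce] with ω hω
      simp [Pi.mul_apply, hω]
    calc ∫ ω, X ω j * Y ω j ∂μ = ∫ ω, (μ[(fun ω => X ω j * Y ω j)|m]) ω ∂μ :=
          (integral_condExp hm).symm
      _ = 0 := by rw [integral_congr_ae hz]; simp
  have hinner : ∀ ω, ⟪X ω, Y ω⟫ = ∑ j : Fin d, X ω j * Y ω j := by
    intro ω
    simp [PiLp.inner_apply, RCLike.inner_apply, conj_trivial]
    exact Finset.sum_congr rfl fun _ _ => mul_comm _ _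
  calc ∫ ω, ⟪X ω, Y ω⟫ ∂μ = ∫ ω, ∑ j : Fin d, X ω j * Y ω j ∂μ := by
        simp_rw [hinner]
    _ = ∑ j : Fin d, ∫ ω, X ω j * Y ω j ∂μ := integral_finset_sum _ fun j _ => hprodint j
    _ = 0 := by simp [key]

/-- Key computation in the single-letterization lemma: a second-order Taylor lower bound
on `φ` combined with a martingale difference sequence `(Δ_k)` with `‖Δ_k‖ ≤ 2/(n-k)`
gives `Σ_{k=0}^{n-1} E[φ(P + Δ_1 + ⋯ + Δ_k)] ≥ n·φ(P) − 4E'(1 + ln(n−1))`. -/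
theorem taylor_martingale_lower_bound {Ω : Type*} {m0 : MeasurableSpace Ω}
    (μ : Measure Ω) [IsProbabilityMeasure μ] {d : ℕ} (n : ℕ) (hn : 2 ≤ n)
    (N : Set (EuclideanSpace ℝ (Fin d))) (hN : Convex ℝ N)
    (φ : EuclideanSpace ℝ (Fin d) → ℝ) (gradφ : EuclideanSpace ℝ (Fin d) → EuclideanSpace ℝ (Fin d))
    (E' : ℝ) (hE' : 0 < E')
    (hTaylor : ∀ S ∈ N, ∀ P ∈ N,
      φ P + ⟪gradφ P, S - P⟫ - E' * ‖S - P‖ ^ 2 ≤ φ S)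
    (ℱ : Filtration ℕ m0) (Δ : ℕ → Ω → EuclideanSpace ℝ (Fin d))
    (hadapt : ∀ k, StronglyMeasurable[ℱ k] (Δ k))
    (hint : ∀ k, Integrable (Δ k) μ)
    (hmds : ∀ k, μ[Δ (k + 1) | ℱ k] =ᵐ[μ] 0)
    (hmean : ∫ ω, Δ 1 ω ∂μ = 0)
    (P : EuclideanSpace ℝ (Fin d)) (hP : P ∈ N)
    (hmem : ∀ k ∈ Finset.range n, ∀ᵐ ω ∂μ, P + ∑ i ∈ Finset.Icc 1 k, Δ i ω ∈ N)
    (hbdd : ∀ k ∈ Finset.Icc 1 (n - 1), ∀ᵐ ω ∂μ, ‖Δ k ω‖ ≤ 2 / ((n : ℝ) - k))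
    (hφint : ∀ k ∈ Finset.range n,
      Integrable (fun ω => φ (P + ∑ i ∈ Finset.Icc 1 k, Δ i ω)) μ) :
    (n : ℝ) * φ P - 4 * E' * (1 + Real.log ((n : ℝ) - 1)) ≤
      ∑ k ∈ Finset.range n, ∫ ω, φ (P + ∑ i ∈ Finset.Icc 1 k, Δ i ω) ∂μ := by
  -- abbreviations
  have hXsm : ∀ k, StronglyMeasurable[ℱ k] (fun ω => ∑ i ∈ Finset.Icc 1 k, Δ i ω) :=
    fun k => Finset.stronglyMeasurable_fun_sum _
      (fun i hi => (hadapt i).mono (ℱ.mono (Finset.mem_Icc.1 hi).2))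
  have hXint : ∀ k, Integrable (fun ω => ∑ i ∈ Finset.Icc 1 k, Δ i ω) μ :=
    fun k => integrable_finset_sum _ fun i _ => hint i
  have hXmean : ∀ k, ∫ ω, (∑ i ∈ Finset.Icc 1 k, Δ i ω) ∂μ = 0 := by
    intro k
    rw [integral_finset_sum _ fun i _ => hint i]
    refine Finset.sum_eq_zero fun i hi => ?_
    obtain ⟨j, rfl⟩ : ∃ j, i = j + 1 := ⟨i - 1, by have := (Finset.mem_Icc.1 hi).1; omega⟩
    have h1 : ∫ ω, Δ (j+1) ω ∂μ = ∫ ω, (μ[Δ (j+1)|ℱ j]) ω ∂μ := (integral_condExp (ℱ.le j)).symm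
    rw [h1, integral_congr_ae (hmds j)]
    simp
  have hXbdd : ∀ k, k ≤ n-1 → ∀ᵐ ω ∂μ,
      ‖∑ i ∈ Finset.Icc 1 k, Δ i ω‖ ≤ ∑ i ∈ Finset.Icc 1 k, 2/((n:ℝ)-i) := by
    intro k hk
    have h := (Filter.eventually_all_finset (Finset.Icc 1 k)).2
      (fun i hi => hbdd i (by simp only [Finset.mem_Icc] at *; omega))
    filter_upwards [h] with ω hω
    exact (norm_sum_le _ _).trans (Finset.sum_le_sum fun i hi => hω i hi)
  have hsqint : ∀ k, k ≤ n-1 → Integrable (fun ω => ‖∑ i ∈ Finset.Icc 1 k, Δ i ω‖^2) μ := by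
    intro k hk
    refine Integrable.mono' (integrable_const ((∑ i ∈ Finset.Icc 1 k, 2/((n:ℝ)-i))^2))
      ((continuous_pow 2).comp_aestronglyMeasurable
        (((hXsm k).mono (ℱ.le k)).aestronglyMeasurable.norm)) ?_
    filter_upwards [hXbdd k hk] with ω hω
    have h2 := pow_le_pow_left₀ (norm_nonneg _) hω 2
    rwa [Real.norm_eq_abs, abs_of_nonneg (by positivity)]
  have hδsqint : ∀ k, k+1 ≤ n-1 → Integrable (fun ω => ‖Δ (k+1) ω‖^2) μ := by
    intro k hk
    refine Integrable.mono' (integrable_const ((2/((n:ℝ)-(k+1)))^2))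
      ((continuous_pow 2).comp_aestronglyMeasurable
        (((hadapt (k+1)).mono (ℱ.le (k+1))).aestronglyMeasurable.norm)) ?_
    filter_upwards [hbdd (k+1) (by simp only [Finset.mem_Icc]; omega)] with ω hω
    have h2 := pow_le_pow_left₀ (norm_nonneg _) hω 2
    rw [Real.norm_eq_abs, abs_of_nonneg (by positivity)]
    push_cast at h2 ⊢
    exact h2
  -- variance bound
  have hvar : ∀ k, k ≤ n-1 → ∫ ω, ‖∑ i ∈ Finset.Icc 1 k, Δ i ω‖^2 ∂μ
      ≤ ∑ i ∈ Finset.Icc 1 k, (2/((n:ℝ)-i))^2 := by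
    intro k
    induction k with
    | zero => intro _; simp
    | succ k ih =>
      intro hk1
      have hk : k ≤ n-1 := by omega
      have hnorm : ∀ ω, ‖∑ i ∈ Finset.Icc 1 (k+1), Δ i ω‖^2
          = ‖∑ i ∈ Finset.Icc 1 k, Δ i ω‖^2
            + 2 * ⟪∑ i ∈ Finset.Icc 1 k, Δ i ω, Δ (k+1) ω⟫ + ‖Δ (k+1) ω‖^2 := by
        intro ω
        rw [Finset.sum_Icc_succ_top (by omega : 1 ≤ k+1)]
        exact norm_add_sq_real _ _
      have hip_int : Integrable (fun ω => ⟪∑ i ∈ Finset.Icc 1 k, Δ i ω, Δ (k+1) ω⟫) μ := by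
        refine Integrable.mono'
          (((hint (k+1)).norm.const_mul (∑ i ∈ Finset.Icc 1 k, 2/((n:ℝ)-i))))
          (AEStronglyMeasurable.inner ((hXsm k).mono (ℱ.le k)).aestronglyMeasurable
            (hint (k+1)).1) ?_
        filter_upwards [hXbdd k hk] with ω hω
        rw [Real.norm_eq_abs]
        exact (abs_real_inner_le_norm _ _).trans
          (mul_le_mul_of_nonneg_right hω (norm_nonneg _))
      have hcross0 : ∫ ω, ⟪∑ i ∈ Finset.Icc 1 k, Δ i ω, Δ (k+1) ω⟫ ∂μ = 0 :=
        tmlb_cross_zero (ℱ.le k) (hXsm k) (hXbdd k hk) (hint (k+1)) (hmds k)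
      have hδsq : ∫ ω, ‖Δ (k+1) ω‖^2 ∂μ ≤ (2/((n:ℝ)-(k+1)))^2 := by
        have hb : ∀ᵐ ω ∂μ, ‖Δ (k+1) ω‖^2 ≤ (2/((n:ℝ)-(k+1)))^2 := by
          filter_upwards [hbdd (k+1) (by simp only [Finset.mem_Icc]; omega)] with ω hω
          have := pow_le_pow_left₀ (norm_nonneg _) hω 2
          push_cast at this ⊢
          exact this
        calc ∫ ω, ‖Δ (k+1) ω‖^2 ∂μ ≤ ∫ _ω, (2/((n:ℝ)-(k+1)))^2 ∂μ :=
              integral_mono_ae (hδsqint k hk1) (integrable_const _) hb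
          _ = (2/((n:ℝ)-(k+1)))^2 := by simp
      calc ∫ ω, ‖∑ i ∈ Finset.Icc 1 (k+1), Δ i ω‖^2 ∂μ
          = ∫ ω, (‖∑ i ∈ Finset.Icc 1 k, Δ i ω‖^2
            + 2 * ⟪∑ i ∈ Finset.Icc 1 k, Δ i ω, Δ (k+1) ω⟫ + ‖Δ (k+1) ω‖^2) ∂μ := by
            simp_rw [hnorm]
        _ = ∫ ω, ‖∑ i ∈ Finset.Icc 1 k, Δ i ω‖^2 ∂μ
            + 2 * ∫ ω, ⟪∑ i ∈ Finset.Icc 1 k, Δ i ω, Δ (k+1) ω⟫ ∂μ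
            + ∫ ω, ‖Δ (k+1) ω‖^2 ∂μ := by
            have i1 : Integrable (fun ω => ‖∑ i ∈ Finset.Icc 1 k, Δ i ω‖^2
                + 2 * ⟪∑ i ∈ Finset.Icc 1 k, Δ i ω, Δ (k+1) ω⟫) μ :=
              (hsqint k hk).add (hip_int.const_mul 2)
            rw [integral_add i1 (hδsqint k hk1),
              integral_add (hsqint k hk) (hip_int.const_mul 2), integral_const_mul]
        _ = ∫ ω, ‖∑ i ∈ Finset.Icc 1 k, Δ i ω‖^2 ∂μ + ∫ ω, ‖Δ (k+1) ω‖^2 ∂μ := by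
            rw [hcross0]; ring
        _ ≤ (∑ i ∈ Finset.Icc 1 k, (2/((n:ℝ)-i))^2) + (2/((n:ℝ)-(k+1)))^2 :=
            add_le_add (ih hk) hδsq
        _ = ∑ i ∈ Finset.Icc 1 (k+1), (2/((n:ℝ)-i))^2 := by
            rw [Finset.sum_Icc_succ_top (by omega : 1 ≤ k+1)]
            push_cast
            ring
  -- per-k lower bound
  have hstep : ∀ k ∈ Finset.range n,
      φ P - E' * ∫ ω, ‖∑ i ∈ Finset.Icc 1 k, Δ i ω‖^2 ∂μ
        ≤ ∫ ω, φ (P + ∑ i ∈ Finset.Icc 1 k, Δ i ω) ∂μ := by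
    intro k hk
    have hk' : k ≤ n-1 := by simp only [Finset.mem_range] at hk; omega
    have hfint : Integrable (fun ω => φ P + ⟪gradφ P, ∑ i ∈ Finset.Icc 1 k, Δ i ω⟫
        - E' * ‖∑ i ∈ Finset.Icc 1 k, Δ i ω‖^2) μ :=
      ((integrable_const (φ P)).add ((hXint k).const_inner _)).sub
        ((hsqint k hk').const_mul E')
    have hmono : ∀ᵐ ω ∂μ, φ P + ⟪gradφ P, ∑ i ∈ Finset.Icc 1 k, Δ i ω⟫
        - E' * ‖∑ i ∈ Finset.Icc 1 k, Δ i ω‖^2 ≤ φ (P + ∑ i ∈ Finset.Icc 1 k, Δ i ω) := by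
      filter_upwards [hmem k hk] with ω hω
      have := hTaylor (P + ∑ i ∈ Finset.Icc 1 k, Δ i ω) hω P hP
      simpa [add_sub_cancel_left] using this
    have hI := integral_mono_ae hfint (hφint k hk) hmono
    have heval : ∫ ω, (φ P + ⟪gradφ P, ∑ i ∈ Finset.Icc 1 k, Δ i ω⟫
        - E' * ‖∑ i ∈ Finset.Icc 1 k, Δ i ω‖^2) ∂μ
        = φ P - E' * ∫ ω, ‖∑ i ∈ Finset.Icc 1 k, Δ i ω‖^2 ∂μ := by
      have i2 : Integrable (fun ω => φ P + ⟪gradφ P, ∑ i ∈ Finset.Icc 1 k, Δ i ω⟫) μ :=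
        (integrable_const (φ P)).add ((hXint k).const_inner _)
      rw [integral_sub i2 ((hsqint k hk').const_mul E'),
        integral_add (integrable_const (φ P)) ((hXint k).const_inner _),
        integral_const_mul, integral_inner (hXint k), hXmean k]
      simp
    linarith [hI, heval.symm.le]
  -- conclude
  have hsum1 : ∑ k ∈ Finset.range n, ∫ ω, ‖∑ i ∈ Finset.Icc 1 k, Δ i ω‖^2 ∂μ
      ≤ 4*(1 + Real.log ((n:ℝ)-1)) := by
    refine le_trans (Finset.sum_le_sum fun k hk => hvar k ?_) (tmlb_sum_bound n hn)
    simp only [Finset.mem_range] at hk; omega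
  have hsum2 : ∑ k ∈ Finset.range n,
      (φ P - E' * ∫ ω, ‖∑ i ∈ Finset.Icc 1 k, Δ i ω‖^2 ∂μ)
      ≤ ∑ k ∈ Finset.range n, ∫ ω, φ (P + ∑ i ∈ Finset.Icc 1 k, Δ i ω) ∂μ :=
    Finset.sum_le_sum hstep
  have hsum3 : ∑ k ∈ Finset.range n,
      (φ P - E' * ∫ ω, ‖∑ i ∈ Finset.Icc 1 k, Δ i ω‖^2 ∂μ)
      = (n:ℝ) * φ P - E' * ∑ k ∈ Finset.range n, ∫ ω, ‖∑ i ∈ Finset.Icc 1 k, Δ i ω‖^2 ∂μ := by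
    rw [Finset.sum_sub_distrib, Finset.sum_const, Finset.card_range, Finset.mul_sum]
    push_cast
    ring
  have hmul := mul_le_mul_of_nonneg_left hsum1 hE'.le
  linarith [hsum2, hsum3.symm.le]
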